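/- arXiv:1610.01045 — 3 statements merged into one kernel-verified Lean document; each statement's English description precedes it below -/
import Mathlib

section
/- Let $\Sigma_{xx}, \Sigma_{yy}, \widetilde{\Sigma}_{xx}, \widetilde{\Sigma}_{yy}$ and $\widetilde{\Sigma}_{xy}$ be real $n\times n$ matrices such that the block matrix $\begin{bmatrix}\widetilde{\Sigma}_{xx} & \widetilde{\Sigma}_{xy}\\ \widetilde{\Sigma}_{xy}^T & \widetilde{\Sigma}_{yy}\end{bmatrix}$ is positive semidefinite, $\Sigma_{xx} \succeq \widetilde{\Sigma}_{xx}$ and $\Sigma_{yy} \succeq \widetilde{\Sigma}_{yy}$. Let $K^\star$ and $\Sigma_{xy}^\star$ be $n\times n$ matrices such that $\begin{bmatrix}\Sigma_{xx} & \Sigma_{xy}^\star\\ \Sigma_{xy}^{\star T} & \Sigma_{yy}\end{bmatrix} \succeq 0$ and such that $\Sigma_{xy}^\star$ maximizes $\operatorname{trace}\big((I-K^\star)\Sigma_{xx}(I-K^\star)^T + (I-K^\star)\Sigma_{xy}K^{\star T} + K^\star \Sigma_{xy}^T(I-K^\star)^T + K^\star \Sigma_{yy}K^{\star T}\big)$ over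 all $n\times n$ matrices $\Sigma_{xy}$ satisfying $\begin{bmatrix}\Sigma_{xx} & \Sigma_{xy}\\ \Sigma_{xy}^T & \Sigma_{yy}\end{bmatrix} \succeq 0$. Define $\Sigma_{zz}^\star = (I-K^\star)\Sigma_{xx}(I-K^\star)^T + (I-K^\star)\Sigma_{xy}^\star K^{\star T} + K^\star \Sigma_{xy}^{\star T}(I-K^\star)^T + K^\star \Sigma_{yy}K^{\star T}$ and $\widetilde{\Sigma}_{zz} = (I-K^\star)\widetilde{\Sigma}_{xx}(I-K^\star)^T + (I-K^\star)\widetilde{\Sigma}_{xy} K^{\star T} + K^\star \widetilde{\Sigma}_{xy}^{T}(I-K^\star)^T + K^\star \widetilde{\Sigma}_{yy}K^{\star T}$. Then $\operatorname{trace}(\Sigma_{zz}^\star) \geq \operatorname{trace}(\widetilde{\Sigma}_{zz})$. -/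
open Matrix

lemma psd_trace_nonneg {n : Type*} [Fintype n] [DecidableEq n] {M : Matrix n n ℝ}
    (hM : M.PosSemidef) : 0 ≤ M.trace := by
  apply Finset.sum_nonneg
  intro i _
  have := hM.dotProduct_mulVec_nonneg (Pi.single i 1)
  simpa [dotProduct, mulVec, Pi.single_apply, Finset.sum_ite_eq] using this

lemma blockDiag_psd {m n : Type*} [Fintype m] [Fintype n] {A : Matrix m m ℝ} {B : Matrix n n ℝ}
    (hA : A.PosSemidef) (hB : B.PosSemidef) : (fromBlocks A 0 0 B).PosSemidef := by
  rw [posSemidef_iff_dotProduct_mulVec]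
  constructor
  · exact (isHermitian_fromBlocks_iff).2 ⟨hA.1, by simp, by simp, hB.1⟩
  · intro x
    have := hA.dotProduct_mulVec_nonneg (x ∘ Sum.inl)
    have := hB.dotProduct_mulVec_nonneg (x ∘ Sum.inr)
    simp [fromBlocks_mulVec, dotProduct, Fintype.sum_sum_type, mulVec]
    positivity

/-- Lemma 1 (trace-consistency of Robust Fusion): if `(x̃, Sxx)` and `(ỹ, Syy)` are
consistent and `(Kstar, Sxystar)` is such that `Sxystar` maximizes the trace of the fused
covariance over all admissible cross-covariances, then the reported trace upper-bounds
the true fused error covariance trace. -/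
theorem robust_fusion_trace_consistent {n : ℕ}
    (Sxx Syy Stxx Styy Stxy Kstar Sxystar : Matrix (Fin n) (Fin n) ℝ)
    (h_joint : (fromBlocks Stxx Stxy Stxyᵀ Styy).PosSemidef)
    (hx : (Sxx - Stxx).PosSemidef)
    (hy : (Syy - Styy).PosSemidef)
    (h_feas : (fromBlocks Sxx Sxystar Sxystarᵀ Syy).PosSemidef)
    (h_max : ∀ Sxy : Matrix (Fin n) (Fin n) ℝ,
      (fromBlocks Sxx Sxy Sxyᵀ Syy).PosSemidef →
      ((1 - Kstar) * Sxx * (1 - Kstar)ᵀ + (1 - Kstar) * Sxy * Kstarᵀ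
        + Kstar * Sxyᵀ * (1 - Kstar)ᵀ + Kstar * Syy * Kstarᵀ).trace ≤
      ((1 - Kstar) * Sxx * (1 - Kstar)ᵀ + (1 - Kstar) * Sxystar * Kstarᵀ
        + Kstar * Sxystarᵀ * (1 - Kstar)ᵀ + Kstar * Syy * Kstarᵀ).trace) :
    ((1 - Kstar) * Stxx * (1 - Kstar)ᵀ + (1 - Kstar) * Stxy * Kstarᵀ
      + Kstar * Stxyᵀ * (1 - Kstar)ᵀ + Kstar * Styy * Kstarᵀ).trace ≤
    ((1 - Kstar) * Sxx * (1 - Kstar)ᵀ + (1 - Kstar) * Sxystar * Kstarᵀ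
      + Kstar * Sxystarᵀ * (1 - Kstar)ᵀ + Kstar * Syy * Kstarᵀ).trace := by
  have hblk : (fromBlocks Sxx Stxy Stxyᵀ Syy).PosSemidef := by
    have := h_joint.add (blockDiag_psd hx hy)
    rwa [fromBlocks_add, add_zero, add_zero, add_sub_cancel, add_sub_cancel] at this
  have h2 := h_max Stxy hblk
  have h3 : 0 ≤ ((1 - Kstar) * (Sxx - Stxx) * (1 - Kstar)ᵀ).trace := by
    rw [← conjTranspose_eq_transpose_of_trivial]
    exact psd_trace_nonneg (hx.mul_mul_conjTranspose_same _)
  have h4 : 0 ≤ (Kstar * (Syy - Styy) * Kstarᵀ).trace := by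
    rw [← conjTranspose_eq_transpose_of_trivial]
    exact psd_trace_nonneg (hy.mul_mul_conjTranspose_same _)
  have key : ((1 - Kstar) * Sxx * (1 - Kstar)ᵀ + (1 - Kstar) * Stxy * Kstarᵀ
      + Kstar * Stxyᵀ * (1 - Kstar)ᵀ + Kstar * Syy * Kstarᵀ).trace
      = ((1 - Kstar) * Stxx * (1 - Kstar)ᵀ + (1 - Kstar) * Stxy * Kstarᵀ
      + Kstar * Stxyᵀ * (1 - Kstar)ᵀ + Kstar * Styy * Kstarᵀ).trace
      + ((1 - Kstar) * (Sxx - Stxx) * (1 - Kstar)ᵀ).trace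
      + (Kstar * (Syy - Styy) * Kstarᵀ).trace := by
    simp [Matrix.mul_sub, Matrix.sub_mul, Matrix.trace_add, Matrix.trace_sub]
    ring
  linarith
end

section
/- Let $C$ be a real $p\times n$ matrix, $D$ a real $p\times m$ matrix, $\Sigma_\eta$ a positive semidefinite $p\times p$ matrix, and let $\Sigma_{xx}, \widetilde{\Sigma}_{xx}$ ($n\times n$), $\Sigma_{yy}, \widetilde{\Sigma}_{yy}$ ($m\times m$), $\widetilde{\Sigma}_{xy}$ ($n\times m$) be real matrices such that $\begin{bmatrix}\widetilde{\Sigma}_{xx} & \widetilde{\Sigma}_{xy}\\ \widetilde{\Sigma}_{xy}^T & \widetilde{\Sigma}_{yy}\end{bmatrix} \succeq 0$, $\Sigma_{xx} \succeq \widetilde{\Sigma}_{xx}$ and $\Sigma_{yy} \succeq \widetilde{\Sigma}_{yy}$. For an $n\times p$ matrix $K$ and an $n\times m$ matrix $Q$, define $\Sigma^+(K,Q) = (I-KC)\Sigma_{xx}(I-KC)^T - (I-KC)Q D^T K^T - KD Q^T (I-KC)^T + KD\Sigma_{yy}D^TK^T + K\Sigma_\eta K^T$. Let $K^\star$ and $\Sigma_{xy}^\star$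 be such that $\begin{bmatrix}\Sigma_{xx} & \Sigma_{xy}^\star\\ \Sigma_{xy}^{\star T} & \Sigma_{yy}\end{bmatrix} \succeq 0$ and $\Sigma_{xy}^\star$ maximizes $\operatorname{trace}(\Sigma^+(K^\star, Q))$ over all $n\times m$ matrices $Q$ satisfying $\begin{bmatrix}\Sigma_{xx} & Q\\ Q^T & \Sigma_{yy}\end{bmatrix} \succeq 0$. Define $\widetilde{\Sigma}^+ = (I-K^\star C)\widetilde{\Sigma}_{xx}(I-K^\star C)^T - (I-K^\star C)\widetilde{\Sigma}_{xy} D^T K^{\star T} - K^\star D \widetilde{\Sigma}_{xy}^T (I-K^\star C)^T + K^\star D\widetilde{\Sigma}_{yy}D^TK^{\star T} + K^\star\Sigma_\eta K^{\star T}$. Then $\operatorname{trace}(\Sigma^+(K^\star, \Sigma_{xy}^\star)) \geq \operatorname{trace}(\widetilde{\Sigma}^+)$. -/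
open Matrix

lemma psd_trace_nonneg_s1 {n : ℕ} {A : Matrix (Fin n) (Fin n) ℝ} (hA : A.PosSemidef) :
    0 ≤ A.trace := by
  refine Finset.sum_nonneg fun i _ => ?_
  have := hA.dotProduct_mulVec_nonneg (Pi.single i 1)
  simpa [dotProduct, mulVec, Pi.single_apply, Finset.sum_ite_eq, Finset.sum_ite_eq'] using this

lemma psd_fromBlocks_diag {n m : ℕ} {P : Matrix (Fin n) (Fin n) ℝ}
    {Q : Matrix (Fin m) (Fin m) ℝ} (hP : P.PosSemidef) (hQ : Q.PosSemidef) :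
    (fromBlocks P 0 0 Q).PosSemidef := by
  refine PosSemidef.of_dotProduct_mulVec_nonneg ?_ ?_
  · unfold Matrix.IsHermitian
    rw [fromBlocks_conjTranspose, hP.1.eq, hQ.1.eq]
    simp
  · intro x
    have h1 := hP.dotProduct_mulVec_nonneg (x ∘ Sum.inl)
    have h2 := hQ.dotProduct_mulVec_nonneg (x ∘ Sum.inr)
    have : dotProduct (star x) ((fromBlocks P 0 0 Q) *ᵥ x)
        = dotProduct (star (x ∘ Sum.inl)) (P *ᵥ (x ∘ Sum.inl))
          + dotProduct (star (x ∘ Sum.inr)) (Q *ᵥ (x ∘ Sum.inr)) := by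
      simp [dotProduct, Fintype.sum_sum_type, fromBlocks, mulVec, Function.comp]
    rw [this]
    exact add_nonneg h1 h2

/-- Lemma 2 (trace-consistency of the robust linear update) for the measurement model
`z = C x̄ + D ȳ + η` with noise covariance `Se`. -/
theorem robust_linear_update_trace_consistent {n m p : ℕ}
    (C : Matrix (Fin p) (Fin n) ℝ) (D : Matrix (Fin p) (Fin m) ℝ)
    (Se : Matrix (Fin p) (Fin p) ℝ) (hSe : Se.PosSemidef)
    (Sxx Stxx : Matrix (Fin n) (Fin n) ℝ)
    (Syy Styy : Matrix (Fin m) (Fin m) ℝ)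
    (Stxy : Matrix (Fin n) (Fin m) ℝ)
    (Kstar : Matrix (Fin n) (Fin p) ℝ) (Sxystar : Matrix (Fin n) (Fin m) ℝ)
    (h_joint : (fromBlocks Stxx Stxy Stxyᵀ Styy).PosSemidef)
    (hx : (Sxx - Stxx).PosSemidef)
    (hy : (Syy - Styy).PosSemidef)
    (h_feas : (fromBlocks Sxx Sxystar Sxystarᵀ Syy).PosSemidef)
    (h_max : ∀ Q : Matrix (Fin n) (Fin m) ℝ,
      (fromBlocks Sxx Q Qᵀ Syy).PosSemidef →
      ((1 - Kstar * C) * Sxx * (1 - Kstar * C)ᵀ - (1 - Kstar * C) * Q * Dᵀ * Kstarᵀ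
        - Kstar * D * Qᵀ * (1 - Kstar * C)ᵀ + Kstar * D * Syy * Dᵀ * Kstarᵀ
        + Kstar * Se * Kstarᵀ).trace ≤
      ((1 - Kstar * C) * Sxx * (1 - Kstar * C)ᵀ - (1 - Kstar * C) * Sxystar * Dᵀ * Kstarᵀ
        - Kstar * D * Sxystarᵀ * (1 - Kstar * C)ᵀ + Kstar * D * Syy * Dᵀ * Kstarᵀ
        + Kstar * Se * Kstarᵀ).trace) :
    ((1 - Kstar * C) * Stxx * (1 - Kstar * C)ᵀ - (1 - Kstar * C) * Stxy * Dᵀ * Kstarᵀ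
      - Kstar * D * Stxyᵀ * (1 - Kstar * C)ᵀ + Kstar * D * Styy * Dᵀ * Kstarᵀ
      + Kstar * Se * Kstarᵀ).trace ≤
    ((1 - Kstar * C) * Sxx * (1 - Kstar * C)ᵀ - (1 - Kstar * C) * Sxystar * Dᵀ * Kstarᵀ
      - Kstar * D * Sxystarᵀ * (1 - Kstar * C)ᵀ + Kstar * D * Syy * Dᵀ * Kstarᵀ
      + Kstar * Se * Kstarᵀ).trace := by
  -- Stxy is feasible
  have hfeasQ : (fromBlocks Sxx Stxy Stxyᵀ Syy).PosSemidef := by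
    have heq : fromBlocks Sxx Stxy Stxyᵀ Syy
        = fromBlocks Stxx Stxy Stxyᵀ Styy + fromBlocks (Sxx - Stxx) 0 0 (Syy - Styy) := by
      rw [fromBlocks_add]; congr 1 <;> simp
    rw [heq]
    exact h_joint.add (psd_fromBlocks_diag hx hy)
  have key := h_max Stxy hfeasQ
  refine le_trans ?_ key
  have hdiff : ((1 - Kstar * C) * Sxx * (1 - Kstar * C)ᵀ - (1 - Kstar * C) * Stxy * Dᵀ * Kstarᵀ
        - Kstar * D * Stxyᵀ * (1 - Kstar * C)ᵀ + Kstar * D * Syy * Dᵀ * Kstarᵀ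
        + Kstar * Se * Kstarᵀ)
      - ((1 - Kstar * C) * Stxx * (1 - Kstar * C)ᵀ - (1 - Kstar * C) * Stxy * Dᵀ * Kstarᵀ
        - Kstar * D * Stxyᵀ * (1 - Kstar * C)ᵀ + Kstar * D * Styy * Dᵀ * Kstarᵀ
        + Kstar * Se * Kstarᵀ)
      = (1 - Kstar * C) * (Sxx - Stxx) * (1 - Kstar * C)ᵀ
        + (Kstar * D) * (Syy - Styy) * (Kstar * D)ᵀ := by
    simp only [Matrix.mul_sub, Matrix.sub_mul, Matrix.transpose_mul, Matrix.mul_assoc]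
    abel
  have hpsd : (0:ℝ) ≤ ((1 - Kstar * C) * (Sxx - Stxx) * (1 - Kstar * C)ᵀ
      + (Kstar * D) * (Syy - Styy) * (Kstar * D)ᵀ).trace := by
    refine psd_trace_nonneg_s1 (Matrix.PosSemidef.add ?_ ?_)
    · have := hx.mul_mul_conjTranspose_same (1 - Kstar * C)
      simpa using this
    · have := hy.mul_mul_conjTranspose_same (Kstar * D)
      simpa using this
  have := Matrix.trace_sub ((1 - Kstar * C) * Sxx * (1 - Kstar * C)ᵀ - (1 - Kstar * C) * Stxy * Dᵀ * Kstarᵀ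
        - Kstar * D * Stxyᵀ * (1 - Kstar * C)ᵀ + Kstar * D * Syy * Dᵀ * Kstarᵀ
        + Kstar * Se * Kstarᵀ)
      ((1 - Kstar * C) * Stxx * (1 - Kstar * C)ᵀ - (1 - Kstar * C) * Stxy * Dᵀ * Kstarᵀ
        - Kstar * D * Stxyᵀ * (1 - Kstar * C)ᵀ + Kstar * D * Styy * Dᵀ * Kstarᵀ
        + Kstar * Se * Kstarᵀ)
  rw [hdiff] at this
  linarith [hpsd, this]
end

section
/- Let $\Sigma_{xx}$ and $\Sigma_{yy}$ be real positive definite $n\times n$ matrices, let $\omega \in [0,1]$, and set $\Sigma_{zz} = \big(\omega \Sigma_{xx}^{-1} + (1-\omega)\Sigma_{yy}^{-1}\big)^{-1}$, $W_x = \omega\,\Sigma_{zz}\Sigma_{xx}^{-1}$ and $W_y = (1-\omega)\,\Sigma_{zz}\Sigma_{yy}^{-1}$. Then for every choice of real $n\times n$ matrices $\widetilde{\Sigma}_{xx}, \widetilde{\Sigma}_{yy}, \widetilde{\Sigma}_{xy}$ such that $\begin{bmatrix}\widetilde{\Sigma}_{xx} & \widetilde{\Sigma}_{xy}\\ \widetilde{\Sigma}_{xy}^T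 & \widetilde{\Sigma}_{yy}\end{bmatrix} \succeq 0$, $\widetilde{\Sigma}_{xx} \preceq \Sigma_{xx}$ and $\widetilde{\Sigma}_{yy} \preceq \Sigma_{yy}$, one has $\Sigma_{zz} \succeq W_x \widetilde{\Sigma}_{xx} W_x^T + W_x \widetilde{\Sigma}_{xy} W_y^T + W_y \widetilde{\Sigma}_{xy}^T W_x^T + W_y \widetilde{\Sigma}_{yy} W_y^T$. -/
open Matrix

private lemma ci_sandwich {n : ℕ} (A M B : Matrix (Fin n) (Fin n) ℝ) (x : Fin n → ℝ) :
    x ⬝ᵥ ((A * M * B) *ᵥ x) = (Aᵀ *ᵥ x) ⬝ᵥ (M *ᵥ (B *ᵥ x)) := by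
  rw [← Matrix.mulVec_mulVec, ← Matrix.mulVec_mulVec, Matrix.dotProduct_mulVec,
    ← Matrix.mulVec_transpose]

private lemma ci_scalar (ω α β P Q R : ℝ) (hω0 : 0 ≤ ω) (hω1 : ω ≤ 1)
    (hP0 : 0 ≤ P) (hR0 : 0 ≤ R) (hPa : P ≤ α) (hRb : R ≤ β) (hQ2 : Q ^ 2 ≤ P * R) :
    ω ^ 2 * P + ω * (1 - ω) * Q + ω * (1 - ω) * Q + (1 - ω) ^ 2 * R ≤ ω * α + (1 - ω) * β := by
  have hω1' : 0 ≤ 1 - ω := by linarith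
  set p := Real.sqrt P with hp
  set r := Real.sqrt R with hr
  have hp0 : 0 ≤ p := Real.sqrt_nonneg P
  have hr0 : 0 ≤ r := Real.sqrt_nonneg R
  have hp2 : p ^ 2 = P := Real.sq_sqrt hP0
  have hr2 : r ^ 2 = R := Real.sq_sqrt hR0
  have hQpr : Q ≤ p * r := by
    nlinarith [hQ2, mul_nonneg hp0 hr0, hp2, hr2, sq_nonneg (Q - p * r), sq_nonneg (Q + p * r)]
  nlinarith [mul_nonneg hω0 (sub_nonneg.mpr hPa), mul_nonneg hω1' (sub_nonneg.mpr hRb),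
    mul_nonneg (mul_nonneg hω0 hω1') (sub_nonneg.mpr hQpr),
    mul_nonneg (mul_nonneg hω0 hω1') (sq_nonneg (p - r)), hp2, hr2,
    mul_nonneg hω0 hω1']

/-- Consistency of Covariance Intersection: with `Szz⁻¹ = ω Sxx⁻¹ + (1-ω) Syy⁻¹`,
`Wx = ω Szz Sxx⁻¹`, `Wy = (1-ω) Szz Syy⁻¹`, the reported covariance `Szz` upper-bounds
the true fused error covariance for every admissible cross-covariance. -/
theorem covariance_intersection_consistent {n : ℕ}
    (Sxx Syy : Matrix (Fin n) (Fin n) ℝ)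
    (hSxx : Sxx.PosDef) (hSyy : Syy.PosDef)
    (ω : ℝ) (hω0 : 0 ≤ ω) (hω1 : ω ≤ 1)
    (Szz Wx Wy : Matrix (Fin n) (Fin n) ℝ)
    (hSzz : Szz = (ω • Sxx⁻¹ + (1 - ω) • Syy⁻¹)⁻¹)
    (hWx : Wx = ω • (Szz * Sxx⁻¹))
    (hWy : Wy = (1 - ω) • (Szz * Syy⁻¹)) :
    ∀ Stxx Styy Stxy : Matrix (Fin n) (Fin n) ℝ,
      (fromBlocks Stxx Stxy Stxyᵀ Styy).PosSemidef →
      (Sxx - Stxx).PosSemidef →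
      (Syy - Styy).PosSemidef →
      (Szz - (Wx * Stxx * Wxᵀ + Wx * Stxy * Wyᵀ + Wy * Stxyᵀ * Wxᵀ
        + Wy * Styy * Wyᵀ)).PosSemidef := by
  intro Stxx Styy Stxy hP hX hY
  have hω1' : (0:ℝ) ≤ 1 - ω := by linarith
  have hSxxi : (Sxx⁻¹).PosDef := hSxx.inv
  have hSyyi : (Syy⁻¹).PosDef := hSyy.inv
  set T : Matrix (Fin n) (Fin n) ℝ := ω • Sxx⁻¹ + (1 - ω) • Syy⁻¹ with hTdef
  have hsx : Sxx⁻¹ᵀ = Sxx⁻¹ := by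
    have h := hSxxi.1.eq; rwa [conjTranspose_eq_transpose_of_trivial] at h
  have hsy : Syy⁻¹ᵀ = Syy⁻¹ := by
    have h := hSyyi.1.eq; rwa [conjTranspose_eq_transpose_of_trivial] at h
  -- T is positive definite
  have hTpd : T.PosDef := by
    refine posDef_iff_dotProduct_mulVec.mpr ⟨?_, fun x hx => ?_⟩
    · show Tᴴ = T
      simp [hTdef, conjTranspose_smul, conjTranspose_eq_transpose_of_trivial,
        transpose_add, transpose_smul, hsx, hsy]
    · have h1 := hSxxi.dotProduct_mulVec_pos hx
      have h2 := hSyyi.dotProduct_mulVec_pos hx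
      simp only [star_trivial] at h1 h2
      simp only [hTdef, add_mulVec, smul_mulVec, dotProduct_add, dotProduct_smul,
        smul_eq_mul, star_trivial]
      rcases eq_or_lt_of_le hω0 with h | h
      · rw [← h]; simpa using h2
      · nlinarith [mul_nonneg hω1' h2.le, mul_pos h h1]
  have hZpd : Szz.PosDef := by rw [hSzz]; exact hTpd.inv
  -- symmetry facts
  have hZh : Szzᵀ = Szz := by
    have h := hZpd.1.eq; rwa [conjTranspose_eq_transpose_of_trivial] at h
  have hxxh : Sxxᵀ = Sxx := by
    have h := hSxx.1.eq; rwa [conjTranspose_eq_transpose_of_trivial] at h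
  have hyyh : Syyᵀ = Syy := by
    have h := hSyy.1.eq; rwa [conjTranspose_eq_transpose_of_trivial] at h
  have hXh : Stxxᵀ = Stxx := by
    have h := hX.1.eq
    rw [conjTranspose_eq_transpose_of_trivial, transpose_sub, hxxh] at h
    exact sub_right_injective h
  have hYh : Styyᵀ = Styy := by
    have h := hY.1.eq
    rw [conjTranspose_eq_transpose_of_trivial, transpose_sub, hyyh] at h
    exact sub_right_injective h
  -- inverses
  have hTz : T * Szz = 1 := by rw [hSzz]; exact mul_nonsing_inv T hTpd.det_pos.ne'.isUnit
  have hxx1 : Sxx * Sxx⁻¹ = 1 := mul_nonsing_inv _ hSxx.det_pos.ne'.isUnit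
  have hyy1 : Syy * Syy⁻¹ = 1 := mul_nonsing_inv _ hSyy.det_pos.ne'.isUnit
  -- transposes of the gains
  have hWxT : Wxᵀ = ω • (Sxx⁻¹ * Szz) := by
    rw [hWx, transpose_smul, transpose_mul, hsx, hZh]
  have hWyT : Wyᵀ = (1 - ω) • (Syy⁻¹ * Szz) := by
    rw [hWy, transpose_smul, transpose_mul, hsy, hZh]
  -- the block positivity as a scalar statement
  have hcross : ∀ a b : Fin n → ℝ, b ⬝ᵥ (Stxyᵀ *ᵥ a) = a ⬝ᵥ (Stxy *ᵥ b) := by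
    intro a b
    rw [dotProduct_mulVec, vecMul_transpose, dotProduct_comm]
  have hblock : ∀ a b : Fin n → ℝ,
      0 ≤ a ⬝ᵥ (Stxx *ᵥ a) + a ⬝ᵥ (Stxy *ᵥ b) + a ⬝ᵥ (Stxy *ᵥ b) + b ⬝ᵥ (Styy *ᵥ b) := by
    intro a b
    have h := hP.dotProduct_mulVec_nonneg (Sum.elim a b)
    simp only [star_trivial, fromBlocks_mulVec, sumElim_dotProduct_sumElim,
      Sum.elim_comp_inl, Sum.elim_comp_inr, dotProduct_add, hcross] at h
    linarith
  refine posSemidef_iff_dotProduct_mulVec.mpr ⟨?_, ?_⟩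
  · -- symmetry of the difference
    show _ᴴ = _
    simp only [conjTranspose_eq_transpose_of_trivial, transpose_sub, transpose_add,
      transpose_mul, transpose_transpose, hZh, hXh, hYh, Matrix.mul_assoc]
    abel
  · intro x
    set y : Fin n → ℝ := Szz *ᵥ x with hy
    set u : Fin n → ℝ := Sxx⁻¹ *ᵥ y with hu
    set v : Fin n → ℝ := Syy⁻¹ *ᵥ y with hv
    -- gains applied to x
    have hux : Wxᵀ *ᵥ x = ω • u := by
      rw [hWxT, smul_mulVec, ← Matrix.mulVec_mulVec, ← hy, ← hu]
    have hvx : Wyᵀ *ᵥ x = (1 - ω) • v := by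
      rw [hWyT, smul_mulVec, ← Matrix.mulVec_mulVec, ← hy, ← hv]
    -- the four quadratic-form identities
    have f1 : x ⬝ᵥ ((Wx * Stxx * Wxᵀ) *ᵥ x) = ω ^ 2 * (u ⬝ᵥ (Stxx *ᵥ u)) := by
      rw [ci_sandwich, hux, mulVec_smul, smul_dotProduct, dotProduct_smul, smul_eq_mul,
        smul_eq_mul]
      ring
    have f2 : x ⬝ᵥ ((Wx * Stxy * Wyᵀ) *ᵥ x) = ω * (1 - ω) * (u ⬝ᵥ (Stxy *ᵥ v)) := by
      rw [ci_sandwich, hux, hvx, mulVec_smul, smul_dotProduct, dotProduct_smul, smul_eq_mul,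
        smul_eq_mul]
      ring
    have f3 : x ⬝ᵥ ((Wy * Stxyᵀ * Wxᵀ) *ᵥ x) = ω * (1 - ω) * (u ⬝ᵥ (Stxy *ᵥ v)) := by
      rw [ci_sandwich, hux, hvx, mulVec_smul, smul_dotProduct, dotProduct_smul, smul_eq_mul,
        smul_eq_mul, hcross]
      ring
    have f4 : x ⬝ᵥ ((Wy * Styy * Wyᵀ) *ᵥ x) = (1 - ω) ^ 2 * (v ⬝ᵥ (Styy *ᵥ v)) := by
      rw [ci_sandwich, hvx, mulVec_smul, smul_dotProduct, dotProduct_smul, smul_eq_mul,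
        smul_eq_mul]
      ring
    -- the reported covariance
    have f0 : x ⬝ᵥ (Szz *ᵥ x) = ω * (y ⬝ᵥ u) + (1 - ω) * (y ⬝ᵥ v) := by
      have e1 : x ⬝ᵥ (Szz *ᵥ x) = y ⬝ᵥ ((T * Szz) *ᵥ x) := by
        rw [hTz, Matrix.one_mulVec, dotProduct_comm, hy]
      rw [e1, ← Matrix.mulVec_mulVec, ← hy, hTdef, add_mulVec, smul_mulVec,
        smul_mulVec, dotProduct_add, dotProduct_smul, dotProduct_smul, smul_eq_mul,
        smul_eq_mul, ← hu, ← hv]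
    -- bounds
    have hSu : Sxx *ᵥ u = y := by
      rw [hu, Matrix.mulVec_mulVec, hxx1, Matrix.one_mulVec]
    have hSv : Syy *ᵥ v = y := by
      rw [hv, Matrix.mulVec_mulVec, hyy1, Matrix.one_mulVec]
    have hMa : u ⬝ᵥ (Sxx *ᵥ u) = y ⬝ᵥ u := by rw [hSu, dotProduct_comm]
    have hMb : v ⬝ᵥ (Syy *ᵥ v) = y ⬝ᵥ v := by rw [hSv, dotProduct_comm]
    have hPa : u ⬝ᵥ (Stxx *ᵥ u) ≤ y ⬝ᵥ u := by
      have h := hX.dotProduct_mulVec_nonneg u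
      simp only [star_trivial, sub_mulVec, dotProduct_sub] at h
      linarith [hMa ▸ h]
    have hRb : v ⬝ᵥ (Styy *ᵥ v) ≤ y ⬝ᵥ v := by
      have h := hY.dotProduct_mulVec_nonneg v
      simp only [star_trivial, sub_mulVec, dotProduct_sub] at h
      linarith [hMb ▸ h]
    have hP0 : 0 ≤ u ⬝ᵥ (Stxx *ᵥ u) := by
      have h := hblock u 0
      simpa using h
    have hR0 : 0 ≤ v ⬝ᵥ (Styy *ᵥ v) := by
      have h := hblock 0 v
      simpa using h
    -- discriminant bound for the cross term
    have hq : ∀ t : ℝ, 0 ≤ (u ⬝ᵥ (Stxx *ᵥ u)) * (t * t) + (2 * (u ⬝ᵥ (Stxy *ᵥ v))) * t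
        + v ⬝ᵥ (Styy *ᵥ v) := by
      intro t
      have h := hblock (t • u) v
      simp only [smul_dotProduct, dotProduct_smul, mulVec_smul, smul_eq_mul] at h
      nlinarith [h]
    have hdisc := discrim_le_zero hq
    rw [discrim] at hdisc
    have hQ2 : (u ⬝ᵥ (Stxy *ᵥ v)) ^ 2 ≤ (u ⬝ᵥ (Stxx *ᵥ u)) * (v ⬝ᵥ (Styy *ᵥ v)) := by
      nlinarith [hdisc]
    -- put everything together
    have key := ci_scalar ω (y ⬝ᵥ u) (y ⬝ᵥ v) (u ⬝ᵥ (Stxx *ᵥ u)) (u ⬝ᵥ (Stxy *ᵥ v))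
      (v ⬝ᵥ (Styy *ᵥ v)) hω0 hω1 hP0 hR0 hPa hRb hQ2
    simp only [star_trivial, sub_mulVec, add_mulVec, dotProduct_sub, dotProduct_add]
    rw [f0]
    linarith [f1, f2, f3, f4, key]
end
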